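/- Let q be a prime power, n | q−1, α ∈ F_q a primitive n-th root of unity, r a positive integer with (r+1) | n, ν = n/(r+1), and 0 ≤ l ≤ r an integer. For m = 0, 1, …, ν−1 let h_m ∈ F_q^n be the vector whose j-th coordinate is α^{j(m(r+1)+l)}, j = 0, …, n−1. Let v ∈ F_q^n be the vector of Hamming weight r+1 whose coordinate iν equals α^{ilν} for i = 0, 1, …, r and whose remaining coordinates are 0. Then every cyclic shift of v is contained in the F_q-linear span of h_0, h_1, …, h_{ν−1}. -/

import Mathlib

open scoped BigOperators

namespace LRC

/-- Hamming weight of a vector. -/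
noncomputable def hwt {n : ℕ} {F : Type*} [Zero F] (c : Fin n → F) : ℕ :=
  Nat.card {i : Fin n // c i ≠ 0}

/-- A linear code is cyclic if it is closed under the cyclic shift of coordinates. -/
def IsCyclicCode {n : ℕ} [NeZero n] {F : Type*} [Field F] (C : Submodule F (Fin n → F)) : Prop :=
  ∀ c ∈ C, (fun i : Fin n => c (i - 1)) ∈ C

/-- `A` is a recovery set for coordinate `i` of the code `C`. -/
def IsRecoverySet {n : ℕ} {F : Type*} [Field F] (C : Submodule F (Fin n → F)) (i : Fin n)
    (A : Finset (Fin n)) : Prop :=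
  i ∉ A ∧ ∃ φ : ((j : A) → F) → F, ∀ c ∈ C, c i = φ (fun j => c j)

/-- The code `C` has locality `r`. -/
def HasLocality {n : ℕ} {F : Type*} [Field F] (C : Submodule F (Fin n → F)) (r : ℕ) : Prop :=
  ∀ i : Fin n, ∃ A : Finset (Fin n), A.card ≤ r ∧ IsRecoverySet C i A

/-- Complete defining set of zeros of a cyclic code (locator field = symbol field). -/
def definingSet {n : ℕ} {F : Type*} [Field F] (C : Submodule F (Fin n → F)) : Set F :=
  {β | β ^ n = 1 ∧ ∀ c ∈ C, ∑ j : Fin n, c j * β ^ (j : ℕ) = 0}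

/-- Complete defining set of zeros of a cyclic code in an extension (locator) field `K`. -/
def definingSetExt (n : ℕ) {F K : Type*} [Field F] [Field K] [Algebra F K]
    (C : Submodule F (Fin n → F)) : Set K :=
  {β | β ^ n = 1 ∧ ∀ c ∈ C, ∑ j : Fin n, algebraMap F K (c j) * β ^ (j : ℕ) = 0}

/-- The cyclic code with a given set of zeros. -/
def codeOfZeros (n : ℕ) {F : Type*} [Field F] (Z : Set F) : Submodule F (Fin n → F) where
  carrier := {c | ∀ β ∈ Z, ∑ j : Fin n, c j * β ^ (j : ℕ) = 0}
  add_mem' := by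
    intro a b ha hb β hβ
    have h1 := ha β hβ
    have h2 := hb β hβ
    calc ∑ j : Fin n, (a + b) j * β ^ (j : ℕ)
        = (∑ j : Fin n, a j * β ^ (j : ℕ)) + ∑ j : Fin n, b j * β ^ (j : ℕ) := by
          rw [← Finset.sum_add_distrib]
          exact Finset.sum_congr rfl (by intro j _; simp [add_mul])
      _ = 0 := by rw [h1, h2, add_zero]
  zero_mem' := by intro β hβ; simp
  smul_mem' := by
    intro t a ha β hβ
    have h1 := ha β hβ
    calc ∑ j : Fin n, (t • a) j * β ^ (j : ℕ)
        = t * ∑ j : Fin n, a j * β ^ (j : ℕ) := by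
          rw [Finset.mul_sum]
          exact Finset.sum_congr rfl (by intro j _; simp [mul_assoc])
      _ = 0 := by rw [h1, mul_zero]

/-- Minimum distance: least Hamming weight of a nonzero codeword. -/
noncomputable def minDist {n : ℕ} {F : Type*} [Field F] (C : Submodule F (Fin n → F)) : ℕ :=
  sInf {w | ∃ c ∈ C, c ≠ 0 ∧ hwt c = w}

/-- The dual code under the standard bilinear form. -/
def dualCode {n : ℕ} {F : Type*} [Field F] (C : Submodule F (Fin n → F)) :
    Submodule F (Fin n → F) where
  carrier := {y | ∀ c ∈ C, ∑ i : Fin n, c i * y i = 0}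
  add_mem' := by
    intro a b ha hb c hc
    have h1 := ha c hc
    have h2 := hb c hc
    calc ∑ i : Fin n, c i * (a + b) i
        = (∑ i : Fin n, c i * a i) + ∑ i : Fin n, c i * b i := by
          rw [← Finset.sum_add_distrib]
          exact Finset.sum_congr rfl (by intro j _; simp [mul_add])
      _ = 0 := by rw [h1, h2, add_zero]
  zero_mem' := by intro c hc; simp
  smul_mem' := by
    intro t a ha c hc
    have h1 := ha c hc
    calc ∑ i : Fin n, c i * (t • a) i
        = t * ∑ i : Fin n, c i * a i := by
          rw [Finset.mul_sum]
          exact Finset.sum_congr rfl (by intro j _; simp [mul_assoc]; ring)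
      _ = 0 := by rw [h1, mul_zero]



lemma sum_pow_prim {F : Type*} [Field F] {β : F} {ν : ℕ} (hβ : IsPrimitiveRoot β ν) (k : ℕ) :
    ∑ m : Fin ν, β ^ (k * (m : ℕ)) = if ν ∣ k then (ν : F) else 0 := by
  simp only [pow_mul]
  rw [Fin.sum_univ_eq_sum_range (fun m => (β ^ k) ^ m)]
  by_cases hd : ν ∣ k
  · rw [if_pos hd]
    have h1 : β ^ k = 1 := by
      obtain ⟨c, rfl⟩ := hd
      rw [pow_mul, hβ.pow_eq_one, one_pow]
    simp [h1]
  · rw [if_neg hd]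
    have h1 : β ^ k ≠ 1 := fun hh => hd ((hβ.pow_eq_one_iff_dvd k).mp hh)
    rw [geom_sum_eq h1]
    have h2 : (β ^ k) ^ ν = 1 := by
      rw [← pow_mul, mul_comm, pow_mul, hβ.pow_eq_one, one_pow]
    rw [h2, sub_self, zero_div]

/-- every cyclic shift of the weight-(r+1) vector `v` lies in the span of the
vectors `h_m`. -/
theorem stmt1 {F : Type*} [Field F] [Fintype F] (q n r ν l : ℕ) [NeZero n]
    (hq : Fintype.card F = q) (hn : n ∣ q - 1)
    (α : F) (hα : IsPrimitiveRoot α n)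
    (hr : 0 < r) (hrn : (r + 1) ∣ n) (hν : ν = n / (r + 1)) (hl : l ≤ r)
    (h : Fin ν → (Fin n → F))
    (hh : ∀ (m : Fin ν) (j : Fin n), h m j = α ^ ((j : ℕ) * ((m : ℕ) * (r + 1) + l)))
    (v : Fin n → F)
    (hv : ∀ j : Fin n, v j = if ν ∣ (j : ℕ) then α ^ (l * (j : ℕ)) else 0) :
    ∀ t : ℕ, (fun i : Fin n => v (i - (Fin.ofNat n t))) ∈ Submodule.span F (Set.range h) := by
  intro t
  have hn0 : n ≠ 0 := NeZero.ne n
  have hnν : n = (r + 1) * ν := by rw [hν, Nat.mul_div_cancel' hrn]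
  have hβ : IsPrimitiveRoot (α ^ (r + 1)) ν := hα.pow (Nat.pos_of_ne_zero hn0) hnν
  have hνF : (ν : F) ≠ 0 := by
    have hq2 : 1 ≤ q := by rw [← hq]; exact Fintype.card_pos
    obtain ⟨k, hk⟩ := hn
    have hcast : ((q - 1 : ℕ) : F) = -1 := by
      rw [Nat.cast_sub hq2, ← hq, FiniteField.cast_card_eq_zero]; ring
    rw [hk, hnν] at hcast
    push_cast at hcast
    intro h0
    rw [h0] at hcast
    simp at hcast
  set s : ℕ := n - t % n with hs
  set c : Fin ν → F := fun m => (ν : F)⁻¹ * α ^ (l * s) * (α ^ (r + 1)) ^ (s * (m : ℕ)) with hc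
  have hαmod : ∀ k : ℕ, α ^ (l * (k % n)) = α ^ (l * k) := by
    intro k
    rw [mul_comm l (k % n), pow_mul, ← pow_eq_pow_mod k hα.pow_eq_one, ← pow_mul, mul_comm]
  have key : (fun i : Fin n => v (i - (Fin.ofNat n t))) = ∑ m : Fin ν, c m • h m := by
    funext j
    have hterm : ∀ m : Fin ν, c m * h m j
        = (ν : F)⁻¹ * (α ^ (l * (s + (j : ℕ))) * (α ^ (r + 1)) ^ ((s + (j : ℕ)) * (m : ℕ))) := by
      intro m
      rw [hh, hc]
      calc ((ν : F)⁻¹ * α ^ (l * s) * (α ^ (r + 1)) ^ (s * (m : ℕ))) * α ^ ((j : ℕ) * ((m : ℕ) * (r + 1) + l))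
          = (ν : F)⁻¹ * (α ^ (l * s) * (α ^ ((r + 1) * (s * (m : ℕ))) * α ^ ((j : ℕ) * ((m : ℕ) * (r + 1) + l)))) := by
            rw [← pow_mul]; ring
        _ = (ν : F)⁻¹ * α ^ (l * s + ((r + 1) * (s * (m : ℕ)) + (j : ℕ) * ((m : ℕ) * (r + 1) + l))) := by
            rw [← pow_add, ← pow_add]
        _ = (ν : F)⁻¹ * (α ^ (l * (s + (j : ℕ))) * (α ^ (r + 1)) ^ ((s + (j : ℕ)) * (m : ℕ))) := by
            rw [← pow_mul, ← pow_add]; congr 1; ring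
    have hRHS : (∑ m : Fin ν, c m • h m) j
        = if ν ∣ (s + (j : ℕ)) then α ^ (l * (s + (j : ℕ))) else 0 := by
      rw [Finset.sum_apply]
      simp only [Pi.smul_apply, smul_eq_mul]
      rw [Finset.sum_congr rfl (fun m _ => hterm m), ← Finset.mul_sum, ← Finset.mul_sum,
        sum_pow_prim hβ]
      by_cases hd : ν ∣ s + (j : ℕ)
      · rw [if_pos hd, if_pos hd]
        field_simp
      · rw [if_neg hd, if_neg hd]; ring
    rw [hRHS, hv]
    have hsub : ((j - (Fin.ofNat n t)) : Fin n).val = ((j : ℕ) + s) % n := by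
      rw [Fin.sub_def]
      simp [Fin.val_natCast, hs, Nat.add_comm]
    rw [hsub]
    have hνn : ν ∣ n := Dvd.intro_left _ hnν.symm
    have hdvd_iff : ν ∣ ((j : ℕ) + s) % n ↔ ν ∣ (j : ℕ) + s := Nat.dvd_mod_iff hνn
    by_cases hd : ν ∣ s + (j : ℕ)
    · rw [if_pos hd, if_pos (hdvd_iff.mpr (by rwa [Nat.add_comm]))]
      rw [hαmod, Nat.add_comm]
    · rw [if_neg hd, if_neg (fun hx => hd (by rw [Nat.add_comm]; exact hdvd_iff.mp hx))]
  rw [key]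
  exact Submodule.sum_mem _ fun m _ =>
    Submodule.smul_mem _ _ (Submodule.subset_span ⟨m, rfl⟩)

end LRC
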